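/- Let H be a Hopf algebra over a field k with antipode S, let δ : H → k be a character (a unital k-algebra homomorphism), and let σ ∈ H be a group-like element (Δ(σ) = σ ⊗ σ and ε(σ) = 1; σ is then invertible with σ^{-1} = S(σ)). Let {}^σk_δ denote the one-dimensional vector space k equipped with the right H-action v·h := δ(h)v and the left H-coaction v ↦ σ ⊗ v. Then (δ, σ) is a modular pair in involution, i.e. δ(σ) = 1 and S_δ² = Ad_σ where S_δ(h) = δ(h₍₁₎)S(h₍₂₎) and Ad_σ(h) = σ h σ^{-1}, if and only if {}^σk_δ is a stable anti-Yetter–Drinfeld module over H, i.e. δ(σ) = 1 and δ(h₍₂₎)•S(h₍₃₎) σ h₍₁₎ = δ(h)•σ for all h ∈ H. -/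

import Mathlib

set_option synthInstance.maxHeartbeats 1000000
set_option maxHeartbeats 1000000


open TensorProduct

section Setup

variable (k : Type*) [Field k] (H : Type*) [Ring H] [HopfAlgebra k H]

/-- The iterated comultiplication `h ↦ h₍₁₎ ⊗ (h₍₂₎ ⊗ h₍₃₎)`. -/
noncomputable def Delta2 : H →ₗ[k] H ⊗[k] (H ⊗[k] H) :=
  (LinearMap.lTensor H (Coalgebra.comul (R := k))) ∘ₗ (Coalgebra.comul (R := k))

/-- The antipode of `H`. -/
noncomputable def antS : H →ₗ[k] H := HopfAlgebra.antipode (R := k)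

/-- The twisted antipode `S_δ(h) = δ(h₍₁₎) S(h₍₂₎)` associated to a character
`δ : H → k`. -/
noncomputable def twistedS (δ : H →ₐ[k] k) : H →ₗ[k] H :=
  (TensorProduct.lid k H).toLinearMap ∘ₗ
    (TensorProduct.map δ.toLinearMap (antS k H)) ∘ₗ (Coalgebra.comul (R := k))

end Setup

namespace S9

open Coalgebra HopfAlgebra

/-! ### A generic convolution product -/

section Conv
variable {k : Type*} [CommSemiring k] {W : Type*} [AddCommMonoid W] [Module k W]
  {A : Type*} [Semiring A] [Algebra k A]

/-- Convolution product relative to a comultiplication-like map `D`. -/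
noncomputable def cv (D : W →ₗ[k] W ⊗[k] W) (f g : W →ₗ[k] A) : W →ₗ[k] A :=
  (LinearMap.mul' k A ∘ₗ TensorProduct.map f g) ∘ₗ D

/-- Convolution unit relative to a counit-like map `E`. -/
noncomputable def cvOne (E : W →ₗ[k] k) : W →ₗ[k] A := Algebra.linearMap k A ∘ₗ E

lemma map_comp_rTensor {M N P Q : Type*} [AddCommMonoid M] [Module k M]
    [AddCommMonoid N] [Module k N] [AddCommMonoid P] [Module k P]
    [AddCommMonoid Q] [Module k Q]
    (X : M →ₗ[k] N) (Y : W →ₗ[k] M) (h : P →ₗ[k] Q) :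
    TensorProduct.map (X ∘ₗ Y) h = TensorProduct.map X h ∘ₗ Y.rTensor P := by
  ext w p; simp [LinearMap.rTensor]

lemma map_comp_lTensor {M N P Q : Type*} [AddCommMonoid M] [Module k M]
    [AddCommMonoid N] [Module k N] [AddCommMonoid P] [Module k P]
    [AddCommMonoid Q] [Module k Q]
    (X : M →ₗ[k] N) (Y : W →ₗ[k] M) (h : P →ₗ[k] Q) :
    TensorProduct.map h (X ∘ₗ Y) = TensorProduct.map h X ∘ₗ Y.lTensor P := by
  ext w p; simp [LinearMap.lTensor]

lemma cv_assoc (D : W →ₗ[k] W ⊗[k] W)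
    (hco : (TensorProduct.assoc k W W W).toLinearMap ∘ₗ D.rTensor W ∘ₗ D = D.lTensor W ∘ₗ D)
    (f g h : W →ₗ[k] A) : cv D (cv D f g) h = cv D f (cv D g h) := by
  have key : LinearMap.mul' k A ∘ₗ
        TensorProduct.map (LinearMap.mul' k A ∘ₗ TensorProduct.map f g) h
      = (LinearMap.mul' k A ∘ₗ
          TensorProduct.map f (LinearMap.mul' k A ∘ₗ TensorProduct.map g h))
        ∘ₗ (TensorProduct.assoc k W W W).toLinearMap := by
    ext x y z
    simp [LinearMap.mul'_apply, mul_assoc]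
  unfold cv
  rw [map_comp_rTensor, map_comp_lTensor, ← LinearMap.comp_assoc, key]
  simp only [LinearMap.comp_assoc]
  rw [← hco]

lemma one_cv (D : W →ₗ[k] W ⊗[k] W) (E : W →ₗ[k] k)
    (hE : E.rTensor W ∘ₗ D = TensorProduct.mk k k W 1) (f : W →ₗ[k] A) :
    cv D (cvOne E) f = f := by
  unfold cv cvOne
  rw [map_comp_rTensor]
  simp only [LinearMap.comp_assoc, hE]
  ext w
  simp [LinearMap.mul'_apply, Algebra.algebraMap_eq_smul_one]

lemma cv_one (D : W →ₗ[k] W ⊗[k] W) (E : W →ₗ[k] k)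
    (hE : E.lTensor W ∘ₗ D = (TensorProduct.mk k W k).flip 1) (f : W →ₗ[k] A) :
    cv D f (cvOne E) = f := by
  unfold cv cvOne
  rw [map_comp_lTensor]
  simp only [LinearMap.comp_assoc, hE]
  ext w
  simp [LinearMap.mul'_apply, Algebra.algebraMap_eq_smul_one]

lemma cv_comp {W' : Type*} [AddCommMonoid W'] [Module k W']
    (D : W →ₗ[k] W ⊗[k] W) (D' : W' →ₗ[k] W' ⊗[k] W') (φ : W' →ₗ[k] W)
    (hφ : D ∘ₗ φ = TensorProduct.map φ φ ∘ₗ D') (f g : W →ₗ[k] A) :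
    (cv D f g) ∘ₗ φ = cv D' (f ∘ₗ φ) (g ∘ₗ φ) := by
  unfold cv
  rw [LinearMap.comp_assoc, hφ, TensorProduct.map_comp]
  simp only [LinearMap.comp_assoc]

end Conv

/-! ### The tensor-square coalgebra and anti-multiplicativity of the antipode -/

section Hopf
variable (k : Type*) [Field k] (H : Type*) [Ring H] [HopfAlgebra k H]

noncomputable def D2 : H ⊗[k] H →ₗ[k] (H ⊗[k] H) ⊗[k] (H ⊗[k] H) :=
  (tensorTensorTensorComm k H H H H).toLinearMap ∘ₗ
    TensorProduct.map (Coalgebra.comul (R := k)) (Coalgebra.comul (R := k))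

noncomputable def E2 : H ⊗[k] H →ₗ[k] k :=
  LinearMap.mul' k k ∘ₗ
    TensorProduct.map (Coalgebra.counit (R := k)) (Coalgebra.counit (R := k))

noncomputable def XiL : (k ⊗[k] H) ⊗[k] (k ⊗[k] H) →ₗ[k] k ⊗[k] (H ⊗[k] H) :=
  TensorProduct.map (LinearMap.mul' k k) LinearMap.id ∘ₗ
    (tensorTensorTensorComm k k H k H).toLinearMap

noncomputable def XiR : (H ⊗[k] k) ⊗[k] (H ⊗[k] k) →ₗ[k] (H ⊗[k] H) ⊗[k] k :=
  TensorProduct.map LinearMap.id (LinearMap.mul' k k) ∘ₗ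
    (tensorTensorTensorComm k H k H k).toLinearMap

noncomputable def Omg :
    (H ⊗[k] (H ⊗[k] H)) ⊗[k] (H ⊗[k] (H ⊗[k] H)) →ₗ[k]
      (H ⊗[k] H) ⊗[k] ((H ⊗[k] H) ⊗[k] (H ⊗[k] H)) :=
  LinearMap.lTensor (H ⊗[k] H) (tensorTensorTensorComm k H H H H).toLinearMap ∘ₗ
    (tensorTensorTensorComm k H (H ⊗[k] H) H (H ⊗[k] H)).toLinearMap

variable {k H}

lemma XiL_tmul (c d : k) (x y : H) :
    XiL k H ((c ⊗ₜ[k] x) ⊗ₜ[k] (d ⊗ₜ[k] y)) = (c * d) ⊗ₜ[k] (x ⊗ₜ[k] y) := by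
  simp [XiL, LinearMap.mul'_apply]

lemma XiR_tmul (c d : k) (x y : H) :
    XiR k H ((x ⊗ₜ[k] c) ⊗ₜ[k] (y ⊗ₜ[k] d)) = (x ⊗ₜ[k] y) ⊗ₜ[k] (c * d) := by
  simp [XiR, LinearMap.mul'_apply]

lemma Omg_tmul (x₁ x₂ x₃ y₁ y₂ y₃ : H) :
    Omg k H ((x₁ ⊗ₜ[k] (x₂ ⊗ₜ[k] x₃)) ⊗ₜ[k] (y₁ ⊗ₜ[k] (y₂ ⊗ₜ[k] y₃)))
      = (x₁ ⊗ₜ[k] y₁) ⊗ₜ[k] ((x₂ ⊗ₜ[k] y₂) ⊗ₜ[k] (x₃ ⊗ₜ[k] y₃)) := by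
  simp [Omg]

lemma E2_tmul (a b : H) :
    E2 k H (a ⊗ₜ[k] b) = Coalgebra.counit (R := k) a * Coalgebra.counit (R := k) b := by
  simp [E2, LinearMap.mul'_apply]

lemma D2_tmul {ι κ : Type*} (a b : H) (ra : Coalgebra.Repr k a ι) (rb : Coalgebra.Repr k b κ) :
    D2 k H (a ⊗ₜ[k] b) = ∑ i ∈ ra.index, ∑ j ∈ rb.index,
      (ra.left i ⊗ₜ[k] rb.left j) ⊗ₜ[k] (ra.right i ⊗ₜ[k] rb.right j) := by
  simp only [D2, LinearMap.coe_comp, Function.comp_apply, LinearEquiv.coe_coe, map_tmul]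
  rw [← ra.eq, ← rb.eq, TensorProduct.sum_tmul, map_sum]
  refine Finset.sum_congr rfl fun i _ => ?_
  rw [TensorProduct.tmul_sum, map_sum]
  exact Finset.sum_congr rfl fun j _ => tensorTensorTensorComm_tmul ..

lemma E2_rTensor_D2 :
    (E2 k H).rTensor (H ⊗[k] H) ∘ₗ D2 k H = TensorProduct.mk k k (H ⊗[k] H) 1 := by
  apply TensorProduct.ext'
  intro a b
  have ha := Coalgebra.sum_counit_tmul_eq (R := k) (ℛ k a)
  have hb := Coalgebra.sum_counit_tmul_eq (R := k) (ℛ k b)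
  have key : XiL k H ((1 ⊗ₜ[k] a) ⊗ₜ[k] (1 ⊗ₜ[k] b)) = 1 ⊗ₜ[k] (a ⊗ₜ[k] b) := by
    rw [XiL_tmul, one_mul]
  calc ((E2 k H).rTensor (H ⊗[k] H) ∘ₗ D2 k H) (a ⊗ₜ[k] b)
      = ∑ i ∈ (ℛ k a).index, ∑ j ∈ (ℛ k b).index,
          (Coalgebra.counit (R := k) ((ℛ k a).left i) *
            Coalgebra.counit (R := k) ((ℛ k b).left j)) ⊗ₜ[k]
            ((ℛ k a).right i ⊗ₜ[k] (ℛ k b).right j) := by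
        simp only [LinearMap.coe_comp, Function.comp_apply,
          D2_tmul a b (ℛ k a) (ℛ k b), map_sum, LinearMap.rTensor_tmul, E2_tmul]
    _ = XiL k H ((∑ i ∈ (ℛ k a).index,
          Coalgebra.counit (R := k) ((ℛ k a).left i) ⊗ₜ[k] (ℛ k a).right i) ⊗ₜ[k]
          (∑ j ∈ (ℛ k b).index,
          Coalgebra.counit (R := k) ((ℛ k b).left j) ⊗ₜ[k] (ℛ k b).right j)) := by
        rw [TensorProduct.sum_tmul, map_sum]
        refine Finset.sum_congr rfl fun i _ => ?_
        rw [TensorProduct.tmul_sum, map_sum]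
        exact Finset.sum_congr rfl fun j _ => (XiL_tmul ..).symm
    _ = 1 ⊗ₜ[k] (a ⊗ₜ[k] b) := by rw [ha, hb, key]
    _ = TensorProduct.mk k k (H ⊗[k] H) 1 (a ⊗ₜ[k] b) := rfl

lemma E2_lTensor_D2 :
    (E2 k H).lTensor (H ⊗[k] H) ∘ₗ D2 k H = (TensorProduct.mk k (H ⊗[k] H) k).flip 1 := by
  apply TensorProduct.ext'
  intro a b
  have ha := Coalgebra.sum_tmul_counit_eq (R := k) (ℛ k a)
  have hb := Coalgebra.sum_tmul_counit_eq (R := k) (ℛ k b)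
  have key : XiR k H ((a ⊗ₜ[k] (1:k)) ⊗ₜ[k] (b ⊗ₜ[k] (1:k))) = (a ⊗ₜ[k] b) ⊗ₜ[k] (1:k) := by
    rw [XiR_tmul, one_mul]
  calc ((E2 k H).lTensor (H ⊗[k] H) ∘ₗ D2 k H) (a ⊗ₜ[k] b)
      = ∑ i ∈ (ℛ k a).index, ∑ j ∈ (ℛ k b).index,
          ((ℛ k a).left i ⊗ₜ[k] (ℛ k b).left j) ⊗ₜ[k]
            (Coalgebra.counit (R := k) ((ℛ k a).right i) *
              Coalgebra.counit (R := k) ((ℛ k b).right j)) := by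
        simp only [LinearMap.coe_comp, Function.comp_apply,
          D2_tmul a b (ℛ k a) (ℛ k b), map_sum, LinearMap.lTensor_tmul, E2_tmul]
    _ = XiR k H ((∑ i ∈ (ℛ k a).index,
          (ℛ k a).left i ⊗ₜ[k] Coalgebra.counit (R := k) ((ℛ k a).right i)) ⊗ₜ[k]
          (∑ j ∈ (ℛ k b).index,
          (ℛ k b).left j ⊗ₜ[k] Coalgebra.counit (R := k) ((ℛ k b).right j))) := by
        rw [TensorProduct.sum_tmul, map_sum]
        refine Finset.sum_congr rfl fun i _ => ?_
        rw [TensorProduct.tmul_sum, map_sum]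
        exact Finset.sum_congr rfl fun j _ => (XiR_tmul ..).symm
    _ = (a ⊗ₜ[k] b) ⊗ₜ[k] (1:k) := by rw [ha, hb, key]
    _ = (TensorProduct.mk k (H ⊗[k] H) k).flip 1 (a ⊗ₜ[k] b) := rfl

lemma D2_coassoc :
    (TensorProduct.assoc k (H ⊗[k] H) (H ⊗[k] H) (H ⊗[k] H)).toLinearMap
        ∘ₗ (D2 k H).rTensor (H ⊗[k] H) ∘ₗ D2 k H
      = (D2 k H).lTensor (H ⊗[k] H) ∘ₗ D2 k H := by
  apply TensorProduct.ext'
  intro a b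
  set ra := ℛ k a with hra
  set rb := ℛ k b with hrb
  set u : (i : ra.ι) → Coalgebra.Repr k (ra.left i) (H × H) := fun i => ℛ k (ra.left i) with hu
  set s : (i : ra.ι) → Coalgebra.Repr k (ra.right i) (H × H) := fun i => ℛ k (ra.right i) with hs
  set v : (j : rb.ι) → Coalgebra.Repr k (rb.left j) (H × H) := fun j => ℛ k (rb.left j) with hv
  set t : (j : rb.ι) → Coalgebra.Repr k (rb.right j) (H × H) := fun j => ℛ k (rb.right j) with ht
  have hL : ((TensorProduct.assoc k (H ⊗[k] H) (H ⊗[k] H) (H ⊗[k] H)).toLinearMap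
        ∘ₗ (D2 k H).rTensor (H ⊗[k] H) ∘ₗ D2 k H) (a ⊗ₜ[k] b)
      = ∑ i ∈ ra.index, ∑ j ∈ rb.index, ∑ p ∈ (u i).index, ∑ q ∈ (v j).index,
          ((u i).left p ⊗ₜ[k] (v j).left q) ⊗ₜ[k]
            (((u i).right p ⊗ₜ[k] (v j).right q) ⊗ₜ[k] (ra.right i ⊗ₜ[k] rb.right j)) := by
    simp only [LinearMap.coe_comp, Function.comp_apply, LinearEquiv.coe_coe]
    rw [D2_tmul a b ra rb, map_sum, map_sum]
    refine Finset.sum_congr rfl fun i _ => ?_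
    rw [map_sum, map_sum]
    refine Finset.sum_congr rfl fun j _ => ?_
    rw [LinearMap.rTensor_tmul, D2_tmul (ra.left i) (rb.left j) (u i) (v j),
      TensorProduct.sum_tmul, map_sum]
    refine Finset.sum_congr rfl fun p _ => ?_
    rw [TensorProduct.sum_tmul, map_sum]
    exact Finset.sum_congr rfl fun q _ => TensorProduct.assoc_tmul ..
  have hR : ((D2 k H).lTensor (H ⊗[k] H) ∘ₗ D2 k H) (a ⊗ₜ[k] b)
      = ∑ i ∈ ra.index, ∑ j ∈ rb.index, ∑ p ∈ (s i).index, ∑ q ∈ (t j).index,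
          (ra.left i ⊗ₜ[k] rb.left j) ⊗ₜ[k]
            (((s i).left p ⊗ₜ[k] (t j).left q) ⊗ₜ[k] ((s i).right p ⊗ₜ[k] (t j).right q)) := by
    simp only [LinearMap.coe_comp, Function.comp_apply]
    rw [D2_tmul a b ra rb, map_sum]
    refine Finset.sum_congr rfl fun i _ => ?_
    rw [map_sum]
    refine Finset.sum_congr rfl fun j _ => ?_
    rw [LinearMap.lTensor_tmul, D2_tmul (ra.right i) (rb.right j) (s i) (t j),
      TensorProduct.tmul_sum]
    refine Finset.sum_congr rfl fun p _ => ?_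
    rw [TensorProduct.tmul_sum]
  have hOm1 : Omg k H ((∑ i ∈ ra.index, ∑ p ∈ (u i).index,
        (u i).left p ⊗ₜ[k] ((u i).right p ⊗ₜ[k] ra.right i)) ⊗ₜ[k]
        (∑ j ∈ rb.index, ∑ q ∈ (v j).index,
        (v j).left q ⊗ₜ[k] ((v j).right q ⊗ₜ[k] rb.right j)))
      = ∑ i ∈ ra.index, ∑ p ∈ (u i).index, ∑ j ∈ rb.index, ∑ q ∈ (v j).index,
          ((u i).left p ⊗ₜ[k] (v j).left q) ⊗ₜ[k]
            (((u i).right p ⊗ₜ[k] (v j).right q) ⊗ₜ[k] (ra.right i ⊗ₜ[k] rb.right j)) := by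
    rw [TensorProduct.sum_tmul, map_sum]
    refine Finset.sum_congr rfl fun i _ => ?_
    rw [TensorProduct.sum_tmul, map_sum]
    refine Finset.sum_congr rfl fun p _ => ?_
    rw [TensorProduct.tmul_sum, map_sum]
    refine Finset.sum_congr rfl fun j _ => ?_
    rw [TensorProduct.tmul_sum, map_sum]
    exact Finset.sum_congr rfl fun q _ => Omg_tmul ..
  have hOm2 : Omg k H ((∑ i ∈ ra.index, ∑ p ∈ (s i).index,
        ra.left i ⊗ₜ[k] ((s i).left p ⊗ₜ[k] (s i).right p)) ⊗ₜ[k]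
        (∑ j ∈ rb.index, ∑ q ∈ (t j).index,
        rb.left j ⊗ₜ[k] ((t j).left q ⊗ₜ[k] (t j).right q)))
      = ∑ i ∈ ra.index, ∑ p ∈ (s i).index, ∑ j ∈ rb.index, ∑ q ∈ (t j).index,
          (ra.left i ⊗ₜ[k] rb.left j) ⊗ₜ[k]
            (((s i).left p ⊗ₜ[k] (t j).left q) ⊗ₜ[k] ((s i).right p ⊗ₜ[k] (t j).right q)) := by
    rw [TensorProduct.sum_tmul, map_sum]
    refine Finset.sum_congr rfl fun i _ => ?_
    rw [TensorProduct.sum_tmul, map_sum]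
    refine Finset.sum_congr rfl fun p _ => ?_
    rw [TensorProduct.tmul_sum, map_sum]
    refine Finset.sum_congr rfl fun j _ => ?_
    rw [TensorProduct.tmul_sum, map_sum]
    exact Finset.sum_congr rfl fun q _ => Omg_tmul ..
  have ea := Coalgebra.sum_tmul_tmul_eq (R := k) ra u s
  have eb := Coalgebra.sum_tmul_tmul_eq (R := k) rb v t
  rw [hL, hR]
  calc ∑ i ∈ ra.index, ∑ j ∈ rb.index, ∑ p ∈ (u i).index, ∑ q ∈ (v j).index,
          ((u i).left p ⊗ₜ[k] (v j).left q) ⊗ₜ[k]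
            (((u i).right p ⊗ₜ[k] (v j).right q) ⊗ₜ[k] (ra.right i ⊗ₜ[k] rb.right j))
      = ∑ i ∈ ra.index, ∑ p ∈ (u i).index, ∑ j ∈ rb.index, ∑ q ∈ (v j).index,
          ((u i).left p ⊗ₜ[k] (v j).left q) ⊗ₜ[k]
            (((u i).right p ⊗ₜ[k] (v j).right q) ⊗ₜ[k] (ra.right i ⊗ₜ[k] rb.right j)) :=
        Finset.sum_congr rfl fun i _ => Finset.sum_comm
    _ = Omg k H ((∑ i ∈ ra.index, ∑ p ∈ (u i).index,
          (u i).left p ⊗ₜ[k] ((u i).right p ⊗ₜ[k] ra.right i)) ⊗ₜ[k]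
          (∑ j ∈ rb.index, ∑ q ∈ (v j).index,
          (v j).left q ⊗ₜ[k] ((v j).right q ⊗ₜ[k] rb.right j))) := hOm1.symm
    _ = Omg k H ((∑ i ∈ ra.index, ∑ p ∈ (s i).index,
          ra.left i ⊗ₜ[k] ((s i).left p ⊗ₜ[k] (s i).right p)) ⊗ₜ[k]
          (∑ j ∈ rb.index, ∑ q ∈ (t j).index,
          rb.left j ⊗ₜ[k] ((t j).left q ⊗ₜ[k] (t j).right q))) := by rw [ea, eb]
    _ = ∑ i ∈ ra.index, ∑ p ∈ (s i).index, ∑ j ∈ rb.index, ∑ q ∈ (t j).index,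
          (ra.left i ⊗ₜ[k] rb.left j) ⊗ₜ[k]
            (((s i).left p ⊗ₜ[k] (t j).left q) ⊗ₜ[k] ((s i).right p ⊗ₜ[k] (t j).right q)) := hOm2
    _ = ∑ i ∈ ra.index, ∑ j ∈ rb.index, ∑ p ∈ (s i).index, ∑ q ∈ (t j).index,
          (ra.left i ⊗ₜ[k] rb.left j) ⊗ₜ[k]
            (((s i).left p ⊗ₜ[k] (t j).left q) ⊗ₜ[k] ((s i).right p ⊗ₜ[k] (t j).right q)) :=
        Finset.sum_congr rfl fun i _ => Finset.sum_comm

lemma mul_tmul_eq (x y : H ⊗[k] H) :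
    x * y = TensorProduct.map (LinearMap.mul' k H) (LinearMap.mul' k H)
      (tensorTensorTensorComm k H H H H (x ⊗ₜ[k] y)) := by
  induction x using TensorProduct.induction_on with
  | zero => simp
  | add x₁ x₂ h₁ h₂ => simp [add_mul, h₁, h₂, add_tmul]
  | tmul a b =>
    induction y using TensorProduct.induction_on with
    | zero => simp
    | add y₁ y₂ h₁ h₂ => simp [mul_add, h₁, h₂, tmul_add]
    | tmul c d => simp [Algebra.TensorProduct.tmul_mul_tmul, LinearMap.mul'_apply]

lemma comul_comp_mul :
    (Coalgebra.comul (R := k) (A := H)) ∘ₗ LinearMap.mul' k H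
      = TensorProduct.map (LinearMap.mul' k H) (LinearMap.mul' k H) ∘ₗ D2 k H := by
  apply TensorProduct.ext'
  intro a b
  simp only [LinearMap.coe_comp, Function.comp_apply, LinearMap.mul'_apply]
  rw [Bialgebra.comul_mul, mul_tmul_eq]
  rfl

lemma cv_antipode_id :
    cv (Coalgebra.comul (R := k) (A := H)) (HopfAlgebra.antipode (R := k)) LinearMap.id
      = cvOne (Coalgebra.counit (R := k)) := by
  have h : (HopfAlgebra.antipode (R := k) (A := H)).rTensor H
      = TensorProduct.map (HopfAlgebra.antipode (R := k)) LinearMap.id := rfl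
  unfold cv cvOne
  rw [LinearMap.comp_assoc, ← h]
  exact HopfAlgebra.mul_antipode_rTensor_comul

lemma cv_id_antipode :
    cv (Coalgebra.comul (R := k) (A := H)) LinearMap.id (HopfAlgebra.antipode (R := k))
      = cvOne (Coalgebra.counit (R := k)) := by
  have h : (HopfAlgebra.antipode (R := k) (A := H)).lTensor H
      = TensorProduct.map LinearMap.id (HopfAlgebra.antipode (R := k)) := rfl
  unfold cv cvOne
  rw [LinearMap.comp_assoc, ← h]
  exact HopfAlgebra.mul_antipode_lTensor_comul

lemma cvOne_counit_comp_mul :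
    (cvOne (Coalgebra.counit (R := k) (A := H)) : H →ₗ[k] H) ∘ₗ LinearMap.mul' k H
      = cvOne (E2 k H) := by
  apply TensorProduct.ext'
  intro a b
  simp [cvOne, E2, LinearMap.mul'_apply, Bialgebra.counit_mul]

/-- The antipode is anti-multiplicative. -/
theorem antipode_mul_anti (a b : H) :
    HopfAlgebra.antipode (R := k) (a * b)
      = HopfAlgebra.antipode (R := k) b * HopfAlgebra.antipode (R := k) a := by
  set S : H →ₗ[k] H := HopfAlgebra.antipode (R := k) with hS
  set m : H ⊗[k] H →ₗ[k] H := LinearMap.mul' k H with hm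
  set N : H ⊗[k] H →ₗ[k] H :=
    (m ∘ₗ TensorProduct.map S S) ∘ₗ (TensorProduct.comm k H H).toLinearMap with hN
  have h1 : cv (D2 k H) (S ∘ₗ m) m = cvOne (E2 k H) := by
    have hc := cv_comp (Coalgebra.comul (R := k) (A := H)) (D2 k H) m comul_comp_mul
      S LinearMap.id
    rw [cv_antipode_id, LinearMap.id_comp, cvOne_counit_comp_mul] at hc
    exact hc.symm
  have h2 : cv (D2 k H) m N = cvOne (E2 k H) := by
    apply TensorProduct.ext'
    intro a b
    have expand : cv (D2 k H) m N (a ⊗ₜ[k] b)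
        = ∑ i ∈ (ℛ k a).index, ∑ j ∈ (ℛ k b).index,
            ((ℛ k a).left i * (ℛ k b).left j) *
              (S ((ℛ k b).right j) * S ((ℛ k a).right i)) := by
      simp only [cv, LinearMap.coe_comp, Function.comp_apply,
        D2_tmul a b (ℛ k a) (ℛ k b), map_sum, map_tmul, LinearMap.mul'_apply, hN,
        LinearEquiv.coe_coe, TensorProduct.comm_tmul, hm]
    rw [expand]
    have step : ∀ i ∈ (ℛ k a).index,
        ∑ j ∈ (ℛ k b).index, ((ℛ k a).left i * (ℛ k b).left j) *
            (S ((ℛ k b).right j) * S ((ℛ k a).right i))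
          = Coalgebra.counit (R := k) b • ((ℛ k a).left i * S ((ℛ k a).right i)) := by
      intro i _
      have : ∀ j ∈ (ℛ k b).index, ((ℛ k a).left i * (ℛ k b).left j) *
            (S ((ℛ k b).right j) * S ((ℛ k a).right i))
          = (ℛ k a).left i *
              (((ℛ k b).left j * S ((ℛ k b).right j)) * S ((ℛ k a).right i)) := by
        intro j _; noncomm_ring
      rw [Finset.sum_congr rfl this, ← Finset.mul_sum, ← Finset.sum_mul,
        HopfAlgebra.sum_mul_antipode_eq_smul (ℛ k b)]
      rw [smul_mul_assoc, mul_smul_comm]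
      simp
    rw [Finset.sum_congr rfl step, ← Finset.smul_sum,
      HopfAlgebra.sum_mul_antipode_eq_smul (ℛ k a)]
    simp only [cvOne, LinearMap.coe_comp, Function.comp_apply, E2_tmul,
      smul_smul]
    rw [mul_comm, Algebra.linearMap_apply, Algebra.algebraMap_eq_smul_one]
  have hfinal : N = S ∘ₗ m := by
    calc N = cv (D2 k H) (cvOne (E2 k H)) N := (one_cv _ _ E2_rTensor_D2 N).symm
      _ = cv (D2 k H) (cv (D2 k H) (S ∘ₗ m) m) N := by rw [h1]
      _ = cv (D2 k H) (S ∘ₗ m) (cv (D2 k H) m N) := cv_assoc _ D2_coassoc _ _ _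
      _ = cv (D2 k H) (S ∘ₗ m) (cvOne (E2 k H)) := by rw [h2]
      _ = S ∘ₗ m := cv_one _ _ E2_lTensor_D2 _
  have := LinearMap.congr_fun hfinal (a ⊗ₜ[k] b)
  simpa [hN, hm, LinearMap.mul'_apply] using this.symm

end Hopf

section Main
variable {k : Type*} [Field k] {H : Type*} [Ring H] [HopfAlgebra k H]

/-- the trivial representation of `comul 1` -/
noncomputable def oneRepr : Coalgebra.Repr k (1 : H) Unit where
  index := (Finset.univ : Finset Unit)
  left := fun _ => 1
  right := fun _ => 1
  eq := by simp [Algebra.TensorProduct.one_def]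

lemma antS_mul (a b : H) : antS k H (a * b) = antS k H b * antS k H a :=
  antipode_mul_anti a b

lemma antS_eq : antS k H = HopfAlgebra.antipode (R := k) := rfl

lemma antS_one : antS k H (1 : H) = 1 := by
  have := HopfAlgebra.sum_mul_antipode_eq_algebraMap_counit (R := k) (oneRepr (H := H))
  simpa [oneRepr, antS_eq] using this

variable (δ : H →ₐ[k] k) (σ : H)

lemma St_repr {ι : Type*} (h : H) (r : Coalgebra.Repr k h ι) :
    twistedS k H δ h = ∑ i ∈ r.index, δ (r.left i) • antS k H (r.right i) := by
  simp only [twistedS, LinearMap.coe_comp, Function.comp_apply, LinearEquiv.coe_coe]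
  rw [← r.eq, map_sum, map_sum]
  simp

lemma St_one : twistedS k H δ (1 : H) = 1 := by
  rw [St_repr δ 1 (oneRepr (H := H))]
  simp [oneRepr, antS_one]

/-- product representation of `comul (a * b)` -/
noncomputable def mulRepr {ι κ : Type*} (a b : H) (ra : Coalgebra.Repr k a ι) (rb : Coalgebra.Repr k b κ) :
    Coalgebra.Repr k (a * b) (ι × κ) where
  index := ra.index ×ˢ rb.index
  left := fun p => ra.left p.1 * rb.left p.2
  right := fun p => ra.right p.1 * rb.right p.2
  eq := by
    rw [Finset.sum_product]
    rw [Bialgebra.comul_mul, ← ra.eq, ← rb.eq, Finset.sum_mul_sum]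
    refine Finset.sum_congr rfl fun i _ => Finset.sum_congr rfl fun j _ => ?_
    dsimp only
    rw [Algebra.TensorProduct.tmul_mul_tmul]

lemma St_mul (a b : H) :
    twistedS k H δ (a * b) = twistedS k H δ b * twistedS k H δ a := by
  rw [St_repr δ (a * b) (mulRepr a b (ℛ k a) (ℛ k b)),
    St_repr δ a (ℛ k a), St_repr δ b (ℛ k b), Finset.sum_mul_sum]
  unfold mulRepr
  rw [Finset.sum_product]
  rw [Finset.sum_comm]
  refine Finset.sum_congr rfl fun j _ => Finset.sum_congr rfl fun i _ => ?_
  rw [map_mul, antS_mul]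
  rw [smul_mul_assoc, mul_smul_comm, smul_smul, mul_comm (δ ((ℛ k a).left i))]

lemma sum_counit_left {ι : Type*} (h : H) (r : Coalgebra.Repr k h ι) :
    ∑ i ∈ r.index, Coalgebra.counit (R := k) (r.left i) • r.right i = h := by
  have h1 := Coalgebra.sum_counit_tmul_eq (R := k) r
  have h2 := congrArg (TensorProduct.lid k H) h1
  simpa only [map_sum, TensorProduct.lid_tmul, one_smul] using h2

lemma sum_counit_right {ι : Type*} (h : H) (r : Coalgebra.Repr k h ι) :
    ∑ i ∈ r.index, Coalgebra.counit (R := k) (r.right i) • r.left i = h := by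
  have h1 := Coalgebra.sum_tmul_counit_eq (R := k) r
  have h2 := congrArg (TensorProduct.rid k H) h1
  simpa only [map_sum, TensorProduct.rid_tmul, one_smul] using h2

lemma triple_eq {M : Type*} [AddCommMonoid M] [Module k M] {ι κ Λ : Type*}
    (T : H ⊗[k] (H ⊗[k] H) →ₗ[k] M) {h : H} (r : Coalgebra.Repr k h ι)
    (u : (i : r.ι) → Coalgebra.Repr k (r.left i) κ)
    (s : (i : r.ι) → Coalgebra.Repr k (r.right i) Λ) :
    ∑ i ∈ r.index, ∑ j ∈ (u i).index,
        T ((u i).left j ⊗ₜ[k] ((u i).right j ⊗ₜ[k] r.right i))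
      = ∑ i ∈ r.index, ∑ j ∈ (s i).index,
        T (r.left i ⊗ₜ[k] ((s i).left j ⊗ₜ[k] (s i).right j)) := by
  have h1 := Coalgebra.sum_tmul_tmul_eq (R := k) r u s
  have h2 := congrArg T h1
  simpa [map_sum] using h2

lemma sum_St_mul {ι : Type*} (h : H) (r : Coalgebra.Repr k h ι) :
    ∑ i ∈ r.index, twistedS k H δ (r.left i) * r.right i = δ h • 1 := by
  set T : H ⊗[k] (H ⊗[k] H) →ₗ[k] H :=
    (TensorProduct.lid k H).toLinearMap ∘ₗ
      TensorProduct.map δ.toLinearMap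
        (LinearMap.mul' k H ∘ₗ TensorProduct.map (antS k H) LinearMap.id) with hT
  have hTt : ∀ x y z : H, T (x ⊗ₜ[k] (y ⊗ₜ[k] z)) = δ x • (antS k H y * z) := by
    intro x y z
    simp [hT, LinearMap.mul'_apply]
  set u : (i : r.ι) → Coalgebra.Repr k (r.left i) (H × H) := fun i => ℛ k (r.left i) with hu
  set s : (i : r.ι) → Coalgebra.Repr k (r.right i) (H × H) := fun i => ℛ k (r.right i) with hs
  calc ∑ i ∈ r.index, twistedS k H δ (r.left i) * r.right i
      = ∑ i ∈ r.index, ∑ j ∈ (u i).index,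
          T ((u i).left j ⊗ₜ[k] ((u i).right j ⊗ₜ[k] r.right i)) := by
        refine Finset.sum_congr rfl fun i _ => ?_
        rw [St_repr δ _ (u i), Finset.sum_mul]
        exact Finset.sum_congr rfl fun j _ => by rw [hTt, smul_mul_assoc]
    _ = ∑ i ∈ r.index, ∑ j ∈ (s i).index,
          T (r.left i ⊗ₜ[k] ((s i).left j ⊗ₜ[k] (s i).right j)) := triple_eq T r u s
    _ = ∑ i ∈ r.index, δ (r.left i) •
          (Coalgebra.counit (R := k) (r.right i) • (1 : H)) := by
        refine Finset.sum_congr rfl fun i _ => ?_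
        calc ∑ j ∈ (s i).index, T (r.left i ⊗ₜ[k] ((s i).left j ⊗ₜ[k] (s i).right j))
            = ∑ j ∈ (s i).index, δ (r.left i) •
                (HopfAlgebra.antipode (R := k) ((s i).left j) * (s i).right j) := by
              refine Finset.sum_congr rfl fun j _ => ?_
              rw [hTt, antS_eq]
          _ = δ (r.left i) • ∑ j ∈ (s i).index,
                HopfAlgebra.antipode (R := k) ((s i).left j) * (s i).right j := by
              rw [Finset.smul_sum]
          _ = δ (r.left i) • (Coalgebra.counit (R := k) (r.right i) • (1 : H)) := by
              rw [HopfAlgebra.sum_antipode_mul_eq_smul (R := k) (s i)]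
    _ = (∑ i ∈ r.index, δ (Coalgebra.counit (R := k) (r.right i) • r.left i)) • (1 : H) := by
        rw [Finset.sum_smul]
        refine Finset.sum_congr rfl fun i _ => ?_
        rw [map_smul, smul_eq_mul, smul_smul, mul_comm]
    _ = δ h • 1 := by rw [← map_sum, sum_counit_right h r]

lemma sum_StS_St {ι : Type*} (x : H) (r : Coalgebra.Repr k x ι) :
    ∑ i ∈ r.index, twistedS k H δ (antS k H (r.right i)) * twistedS k H δ (r.left i)
      = Coalgebra.counit (R := k) x • (1 : H) := by
  have step : ∀ i ∈ r.index,
      twistedS k H δ (antS k H (r.right i)) * twistedS k H δ (r.left i)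
        = twistedS k H δ (r.left i * antS k H (r.right i)) := fun i _ =>
    (St_mul δ (r.left i) (antS k H (r.right i))).symm
  rw [Finset.sum_congr rfl step, ← map_sum, antS_eq,
    HopfAlgebra.sum_mul_antipode_eq_smul (R := k) r, map_smul, St_one]

/-- representation of the comultiplication of a group-like element -/
noncomputable def grpRepr (hσ1 : Coalgebra.comul (R := k) σ = σ ⊗ₜ[k] σ) :
    Coalgebra.Repr k σ Unit where
  index := (Finset.univ : Finset Unit)
  left := fun _ => σ
  right := fun _ => σ
  eq := by simp [hσ1]

variable (hσ1 : Coalgebra.comul (R := k) σ = σ ⊗ₜ[k] σ)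
  (hσ2 : Coalgebra.counit (R := k) σ = (1 : k))

include hσ1 hσ2 in
lemma sigma_mul_antS : σ * antS k H σ = 1 := by
  have := HopfAlgebra.sum_mul_antipode_eq_algebraMap_counit (R := k) (grpRepr σ hσ1)
  simpa [grpRepr, hσ2, antS_eq] using this

include hσ1 hσ2 in
lemma antS_mul_sigma : antS k H σ * σ = 1 := by
  have := HopfAlgebra.sum_antipode_mul_eq_algebraMap_counit (R := k) (grpRepr σ hσ1)
  simpa [grpRepr, hσ2, antS_eq] using this

/-- The trilinear evaluation map `a ⊗ (b ⊗ c) ↦ δ(b) • (S(c) σ a)`. -/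
noncomputable def Psi : H ⊗[k] (H ⊗[k] H) →ₗ[k] H :=
  LinearMap.mul' k H ∘ₗ
    TensorProduct.map
      (LinearMap.mulRight k σ ∘ₗ (TensorProduct.lid k H).toLinearMap ∘ₗ
        TensorProduct.map δ.toLinearMap (antS k H))
      LinearMap.id ∘ₗ
    (TensorProduct.comm k H (H ⊗[k] H)).toLinearMap

lemma Psi_tmul (a b c : H) :
    Psi δ σ (a ⊗ₜ[k] (b ⊗ₜ[k] c)) = δ b • (antS k H c * σ * a) := by
  simp [Psi, LinearMap.mul'_apply, smul_mul_assoc]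

lemma Delta2_repr {ι κ : Type*} (h : H) (r : Coalgebra.Repr k h ι)
    (s : (i : r.ι) → Coalgebra.Repr k (r.right i) κ) :
    Delta2 k H h = ∑ i ∈ r.index, ∑ j ∈ (s i).index,
      r.left i ⊗ₜ[k] ((s i).left j ⊗ₜ[k] (s i).right j) := by
  simp only [Delta2, LinearMap.coe_comp, Function.comp_apply]
  rw [← r.eq, map_sum]
  refine Finset.sum_congr rfl fun i _ => ?_
  rw [LinearMap.lTensor_tmul, ← (s i).eq, TensorProduct.tmul_sum]

lemma Psi_Delta2 {ι : Type*} (h : H) (r : Coalgebra.Repr k h ι) :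
    Psi δ σ (Delta2 k H h)
      = ∑ i ∈ r.index, twistedS k H δ (r.right i) * σ * r.left i := by
  rw [Delta2_repr h r (fun i => ℛ k (r.right i)), map_sum]
  refine Finset.sum_congr rfl fun i _ => ?_
  rw [map_sum]
  rw [St_repr δ _ (ℛ k (r.right i)), Finset.sum_mul, Finset.sum_mul]
  refine Finset.sum_congr rfl fun j _ => ?_
  rw [Psi_tmul, smul_mul_assoc, smul_mul_assoc]

include hσ1 hσ2 in
theorem forward_dir
    (M : ∀ h : H, twistedS k H δ (twistedS k H δ h) = σ * h * antS k H σ) :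
    ∀ h : H, Psi δ σ (Delta2 k H h) = δ h • σ := by
  intro h
  rw [Psi_Delta2 δ σ h (ℛ k h)]
  have hterm : ∀ i ∈ (ℛ k h).index,
      twistedS k H δ ((ℛ k h).right i) * σ * (ℛ k h).left i
        = twistedS k H δ (twistedS k H δ ((ℛ k h).left i) * (ℛ k h).right i) * σ := by
    intro i _
    have h1 : σ * (ℛ k h).left i
        = twistedS k H δ (twistedS k H δ ((ℛ k h).left i)) * σ := by
      rw [M ((ℛ k h).left i), mul_assoc, antS_mul_sigma σ hσ1 hσ2, mul_one]
    calc twistedS k H δ ((ℛ k h).right i) * σ * (ℛ k h).left i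
        = twistedS k H δ ((ℛ k h).right i) * (σ * (ℛ k h).left i) := mul_assoc ..
      _ = twistedS k H δ ((ℛ k h).right i) *
            (twistedS k H δ (twistedS k H δ ((ℛ k h).left i)) * σ) := by rw [h1]
      _ = twistedS k H δ ((ℛ k h).right i) *
            twistedS k H δ (twistedS k H δ ((ℛ k h).left i)) * σ := (mul_assoc ..).symm
      _ = twistedS k H δ (twistedS k H δ ((ℛ k h).left i) * (ℛ k h).right i) * σ := by
          rw [← St_mul]
  rw [Finset.sum_congr rfl hterm, ← Finset.sum_mul, ← map_sum,
    sum_St_mul δ h (ℛ k h), map_smul, St_one, smul_mul_assoc, one_mul]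

include hσ1 hσ2 in
theorem backward_dir
    (C : ∀ h : H, Psi δ σ (Delta2 k H h) = δ h • σ) :
    ∀ h : H, twistedS k H δ (twistedS k H δ h) = σ * h * antS k H σ := by
  have C' : ∀ (x : H) (rx : Coalgebra.Repr k x (H × H)),
      ∑ i ∈ rx.index, twistedS k H δ (rx.right i) * σ * rx.left i = δ x • σ := by
    intro x rx
    rw [← Psi_Delta2 δ σ x rx]
    exact C x
  intro h
  set r := ℛ k h with hr
  set u : (i : r.ι) → Coalgebra.Repr k (r.left i) (H × H) := fun i => ℛ k (r.left i) with hu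
  set s : (i : r.ι) → Coalgebra.Repr k (r.right i) (H × H) := fun i => ℛ k (r.right i) with hs
  set T : H ⊗[k] (H ⊗[k] H) →ₗ[k] H :=
    LinearMap.mul' k H ∘ₗ
      TensorProduct.map
        (LinearMap.mulRight k σ ∘ₗ LinearMap.mul' k H ∘ₗ
          TensorProduct.map (twistedS k H δ ∘ₗ antS k H) (twistedS k H δ) ∘ₗ
            (TensorProduct.comm k H H).toLinearMap)
        LinearMap.id ∘ₗ
      (TensorProduct.comm k H (H ⊗[k] H)).toLinearMap with hT
  have hTt : ∀ x y z : H, T (x ⊗ₜ[k] (y ⊗ₜ[k] z))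
      = twistedS k H δ (antS k H z) * twistedS k H δ y * σ * x := by
    intro x y z
    simp [hT, LinearMap.mul'_apply, mul_assoc]
  have key : σ * h = twistedS k H δ (twistedS k H δ h) * σ := by
    calc σ * h
        = σ * ∑ i ∈ r.index, Coalgebra.counit (R := k) (r.right i) • r.left i := by
          rw [sum_counit_right h r]
      _ = ∑ i ∈ r.index, Coalgebra.counit (R := k) (r.right i) • (σ * r.left i) := by
          rw [Finset.mul_sum]
          exact Finset.sum_congr rfl fun i _ => (mul_smul_comm ..)
      _ = ∑ i ∈ r.index, (∑ j ∈ (s i).index,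
            twistedS k H δ (antS k H ((s i).right j)) * twistedS k H δ ((s i).left j))
              * (σ * r.left i) := by
          refine Finset.sum_congr rfl fun i _ => ?_
          rw [sum_StS_St δ (r.right i) (s i), smul_mul_assoc, one_mul]
      _ = ∑ i ∈ r.index, ∑ j ∈ (s i).index,
            T (r.left i ⊗ₜ[k] ((s i).left j ⊗ₜ[k] (s i).right j)) := by
          refine Finset.sum_congr rfl fun i _ => ?_
          rw [Finset.sum_mul]
          refine Finset.sum_congr rfl fun j _ => ?_
          rw [hTt, mul_assoc, mul_assoc, mul_assoc]
      _ = ∑ i ∈ r.index, ∑ j ∈ (u i).index,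
            T ((u i).left j ⊗ₜ[k] ((u i).right j ⊗ₜ[k] r.right i)) :=
          (triple_eq T r u s).symm
      _ = ∑ i ∈ r.index, twistedS k H δ (antS k H (r.right i)) * (δ (r.left i) • σ) := by
          refine Finset.sum_congr rfl fun i _ => ?_
          calc ∑ j ∈ (u i).index, T ((u i).left j ⊗ₜ[k] ((u i).right j ⊗ₜ[k] r.right i))
              = ∑ j ∈ (u i).index, twistedS k H δ (antS k H (r.right i)) *
                  (twistedS k H δ ((u i).right j) * σ * (u i).left j) := by
                refine Finset.sum_congr rfl fun j _ => ?_
                rw [hTt, mul_assoc, mul_assoc, mul_assoc]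
            _ = twistedS k H δ (antS k H (r.right i)) * ∑ j ∈ (u i).index,
                  twistedS k H δ ((u i).right j) * σ * (u i).left j := by
                rw [Finset.mul_sum]
            _ = twistedS k H δ (antS k H (r.right i)) * (δ (r.left i) • σ) := by
                rw [C' (r.left i) (u i)]
      _ = (∑ i ∈ r.index, δ (r.left i) • twistedS k H δ (antS k H (r.right i))) * σ := by
          rw [Finset.sum_mul]
          refine Finset.sum_congr rfl fun i _ => ?_
          rw [mul_smul_comm, smul_mul_assoc]
      _ = twistedS k H δ (twistedS k H δ h) * σ := by
          rw [St_repr δ h r, map_sum]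
          refine congrArg (· * σ) ?_
          refine Finset.sum_congr rfl fun i _ => ?_
          rw [map_smul]
  calc twistedS k H δ (twistedS k H δ h)
      = twistedS k H δ (twistedS k H δ h) * (σ * antS k H σ) := by
        rw [sigma_mul_antS σ hσ1 hσ2, mul_one]
    _ = (twistedS k H δ (twistedS k H δ h) * σ) * antS k H σ := (mul_assoc ..).symm
    _ = σ * h * antS k H σ := by rw [← key]

lemma sum_finset_eq_fin {M : Type*} [AddCommMonoid M] {ι : Type*} (s : Finset ι)
    (f : ι → M) : ∑ p ∈ s, f p = ∑ i : Fin s.card, f ((s.equivFin.symm i) : ι) := by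
  rw [← Finset.sum_coe_sort s f]
  exact (Fintype.sum_equiv s.equivFin (fun x : s => f x)
    (fun i => f ((s.equivFin.symm i) : ι))
    (fun x => by simp))

end Main
end S9

/-- Let `H` be a Hopf algebra with antipode `S`, `δ : H → k` a character
and `σ ∈ H` a group-like element (so `σ⁻¹ = S(σ)`).  Then `(δ, σ)` is a modular pair
in involution, i.e. `δ(σ) = 1` and `S_δ² = Ad_σ` (with `S_δ(h) = δ(h₍₁₎)S(h₍₂₎)` and
`Ad_σ(h) = σhσ⁻¹`), if and only if the one-dimensional space `{}^σk_δ` (right action by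
`δ`, left coaction by `σ`) is a stable anti-Yetter–Drinfeld module over `H`, i.e.
`δ(σ) = 1` and `δ(h₍₂₎) • S(h₍₃₎) σ h₍₁₎ = δ(h) • σ` for all `h ∈ H` (the latter in
Sweedler notation, through arbitrary finite representations of `Δ²(h)`). -/
theorem statement9 (k : Type*) [Field k] (H : Type*) [Ring H] [HopfAlgebra k H]
    (δ : H →ₐ[k] k) (σ : H)
    (hσ1 : Coalgebra.comul (R := k) σ = σ ⊗ₜ[k] σ)
    (hσ2 : Coalgebra.counit (R := k) σ = (1 : k)) :
    (δ σ = 1 ∧ ∀ h : H, twistedS k H δ (twistedS k H δ h) = σ * h * antS k H σ)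
    ↔
    (δ σ = 1 ∧ ∀ (h : H) (n : ℕ) (A B C : Fin n → H),
      Delta2 k H h = ∑ i : Fin n, A i ⊗ₜ[k] (B i ⊗ₜ[k] C i) →
      ∑ i : Fin n, δ (B i) • (antS k H (C i) * σ * A i) = δ h • σ) := by
  constructor
  · rintro ⟨hd, hM⟩
    refine ⟨hd, ?_⟩
    intro h n A B C heq
    have hC : S9.Psi δ σ (Delta2 k H h) = δ h • σ := S9.forward_dir δ σ hσ1 hσ2 hM h
    calc ∑ i : Fin n, δ (B i) • (antS k H (C i) * σ * A i)
        = ∑ i : Fin n, S9.Psi δ σ (A i ⊗ₜ[k] (B i ⊗ₜ[k] C i)) :=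
          Finset.sum_congr rfl fun i _ => (S9.Psi_tmul δ σ (A i) (B i) (C i)).symm
      _ = S9.Psi δ σ (Delta2 k H h) := by rw [heq, map_sum]
      _ = δ h • σ := hC
  · rintro ⟨hd, hA⟩
    refine ⟨hd, ?_⟩
    apply S9.backward_dir δ σ hσ1 hσ2
    intro h
    set r := Coalgebra.Repr.arbitrary k h with hr
    set s : (i : r.ι) → Coalgebra.Repr k (r.right i) (H × H) :=
      fun i => Coalgebra.Repr.arbitrary k (r.right i) with hs
    set Sg : Finset ((i : r.ι) × (s i).ι) := r.index.sigma (fun i => (s i).index) with hSg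
    set F : ((i : r.ι) × (s i).ι) → H ⊗[k] (H ⊗[k] H) :=
      fun p => r.left p.1 ⊗ₜ[k] ((s p.1).left p.2 ⊗ₜ[k] (s p.1).right p.2) with hF
    set AA : Fin Sg.card → H := fun i => r.left (Sg.equivFin.symm i).1.1 with hAA
    set BB : Fin Sg.card → H :=
      fun i => (s (Sg.equivFin.symm i).1.1).left (Sg.equivFin.symm i).1.2 with hBB
    set CC : Fin Sg.card → H :=
      fun i => (s (Sg.equivFin.symm i).1.1).right (Sg.equivFin.symm i).1.2 with hCC
    have hFe : ∀ i : Fin Sg.card,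
        F ((Sg.equivFin.symm i) : ((i : r.ι) × (s i).ι)) = AA i ⊗ₜ[k] (BB i ⊗ₜ[k] CC i) :=
      fun i => rfl
    have heq : Delta2 k H h = ∑ i : Fin Sg.card, AA i ⊗ₜ[k] (BB i ⊗ₜ[k] CC i) := by
      rw [S9.Delta2_repr h r s, ← Finset.sum_sigma r.index (fun i => (s i).index) F,
        S9.sum_finset_eq_fin Sg F]
    have := hA h Sg.card AA BB CC heq
    calc S9.Psi δ σ (Delta2 k H h)
        = ∑ i : Fin Sg.card, S9.Psi δ σ (AA i ⊗ₜ[k] (BB i ⊗ₜ[k] CC i)) := by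
          rw [heq, map_sum]
      _ = δ h • σ := by
          rw [← this]
          exact Finset.sum_congr rfl fun i _ => S9.Psi_tmul δ σ _ _ _
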